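/- Fix an integer d ≥ 6. Let Q be a finite simple graph whose vertex set is K ∪ {u₁, u₂, u₃}, where u₁, u₂, u₃ are three distinct vertices not in K, the induced subgraph Q[K] is a clique on d vertices, the set {u₁, u₂, u₃} is an independent set (pairwise non-adjacent), and each uᵢ is adjacent to every vertex of K. Then Q is (deg−1)-choosable. -/

import Mathlib

open Finset

namespace SolitaryAux

variable {V : Type*} [DecidableEq V]

lemma card_sdiff_ge' {A S : Finset ℕ} {x : ℕ} (hx : x ∈ S) (hxA : x ∉ A) :
    A.card - (S.card - 1) ≤ (A \ S).card := by
  have h : A \ S = A \ S.erase x := by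
    ext a
    simp only [mem_sdiff, mem_erase]
    constructor
    · rintro ⟨ha, hs⟩; exact ⟨ha, fun h' => hs h'.2⟩
    · rintro ⟨ha, hs⟩
      refine ⟨ha, fun h' => hs ⟨?_, h'⟩⟩
      rintro rfl; exact hxA ha
  rw [h, ← Finset.card_erase_of_mem hx]
  exact Finset.le_card_sdiff _ _

lemma biUnion_sdiff' (T : Finset V) (L : V → Finset ℕ) (S : Finset ℕ) :
    (T.biUnion fun w => L w \ S) = T.biUnion L \ S := by
  ext x; simp only [mem_biUnion, mem_sdiff]; tauto

lemma exists_sdr (K : Finset V) (M : V → Finset ℕ)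
    (hall : ∀ T ⊆ K, T.card ≤ (T.biUnion M).card) :
    ∃ f : V → ℕ, (∀ w ∈ K, f w ∈ M w) ∧ ∀ a ∈ K, ∀ b ∈ K, a ≠ b → f a ≠ f b := by
  have h : ∀ s : Finset {x // x ∈ K}, s.card ≤ (s.biUnion fun x => M x.1).card := by
    intro s
    have h1 : s.card = (s.image Subtype.val).card :=
      (Finset.card_image_of_injective _ Subtype.val_injective).symm
    have h2 : (s.image Subtype.val).biUnion M = s.biUnion fun x => M x.1 :=
      Finset.image_biUnion
    have h3 : s.image Subtype.val ⊆ K := by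
      intro x hx
      simp only [Finset.mem_image] at hx
      obtain ⟨y, _, rfl⟩ := hx
      exact y.2
    rw [h1, ← h2]
    exact hall _ h3
  obtain ⟨f0, hinj, hmem⟩ := (Finset.all_card_le_biUnion_card_iff_exists_injective _).mp h
  refine ⟨fun v => if h : v ∈ K then f0 ⟨v, h⟩ else 0, ?_, ?_⟩
  · intro w hw; simp only [dif_pos hw]; exact hmem ⟨w, hw⟩
  · intro a ha b hb hab
    simp only [dif_pos ha, dif_pos hb]
    intro h
    exact hab (congrArg Subtype.val (hinj h))

lemma hall_of_P (d : ℕ) (hd : 6 ≤ d) (K : Finset V) (hK : K.card = d)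
    (L : V → Finset ℕ) (hL : ∀ w ∈ K, (L w).card = d + 1)
    (S : Finset ℕ) (hS : S.card ≤ 3)
    (P1 : d ≤ (K.biUnion L \ S).card)
    (P2 : ∀ T ⊆ K, T.card = d - 1 → d - 1 ≤ (T.biUnion L \ S).card) :
    ∀ T ⊆ K, T.card ≤ (T.biUnion fun w => L w \ S).card := by
  intro T hT
  rw [biUnion_sdiff']
  rcases Finset.eq_empty_or_nonempty T with rfl | ⟨w, hw⟩
  · simp
  have hTcard : T.card ≤ d := hK ▸ Finset.card_le_card hT
  have hLw : d + 1 ≤ (T.biUnion L).card := by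
    have h := Finset.card_le_card (Finset.subset_biUnion_of_mem L hw)
    rwa [hL w (hT hw)] at h
  have hsd : (T.biUnion L).card - S.card ≤ (T.biUnion L \ S).card := Finset.le_card_sdiff _ _
  by_cases hsmall : T.card ≤ d - 2
  · omega
  by_cases hmid : T.card = d - 1
  · have := P2 T hT hmid; omega
  · have hTK : T = K := Finset.eq_of_subset_of_card_le hT (by omega)
    rw [hTK, hK]
    exact P1

end SolitaryAux

open Finset
namespace SolitaryAux2

lemma card_sdiff_ge' {A S : Finset ℕ} {x : ℕ} (hx : x ∈ S) (hxA : x ∉ A) :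
    A.card - (S.card - 1) ≤ (A \ S).card := by
  have h : A \ S = A \ S.erase x := by
    ext a
    simp only [mem_sdiff, mem_erase]
    constructor
    · rintro ⟨ha, hs⟩; exact ⟨ha, fun h' => hs h'.2⟩
    · rintro ⟨ha, hs⟩
      refine ⟨ha, fun h' => hs ⟨?_, h'⟩⟩
      rintro rfl; exact hxA ha
  rw [h, ← Finset.card_erase_of_mem hx]
  exact Finset.le_card_sdiff _ _

lemma choose_colors {V : Type*} [DecidableEq V] (d : ℕ) (hd : 6 ≤ d)
    (K : Finset V) (hK : K.card = d)
    (L : V → Finset ℕ) (hL : ∀ w ∈ K, (L w).card = d + 1)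
    (L₁ L₂ L₃ : Finset ℕ) (h1 : L₁.card = d - 1) (h2 : L₂.card = d - 1) (h3 : L₃.card = d - 1) :
    ∃ c₁ ∈ L₁, ∃ c₂ ∈ L₂, ∃ c₃ ∈ L₃,
      d ≤ (K.biUnion L \ ({c₁, c₂, c₃} : Finset ℕ)).card ∧
      ∀ T ⊆ K, T.card = d - 1 →
        d - 1 ≤ (T.biUnion L \ ({c₁, c₂, c₃} : Finset ℕ)).card := by
  classical
  set U := K.biUnion L with hUdef
  have hKne : K.Nonempty := Finset.card_pos.mp (by omega)
  have hUnion : ∀ T, T ⊆ K → T.Nonempty → d + 1 ≤ (T.biUnion L).card := by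
    rintro T hT ⟨w, hw⟩
    calc d + 1 = (L w).card := (hL w (hT hw)).symm
      _ ≤ _ := Finset.card_le_card (Finset.subset_biUnion_of_mem L hw)
  have hUcard : d + 1 ≤ U.card := hUnion K (le_refl _) hKne
  have hne1 : L₁.Nonempty := Finset.card_pos.mp (by omega)
  have hne2 : L₂.Nonempty := Finset.card_pos.mp (by omega)
  have hne3 : L₃.Nonempty := Finset.card_pos.mp (by omega)
  have hcard3 : ∀ a b c : ℕ, ({a, b, c} : Finset ℕ).card ≤ 3 := by
    intro a b c
    have hc : ({c} : Finset ℕ).card = 1 := Finset.card_singleton c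
    have hbc := Finset.card_insert_le b ({c} : Finset ℕ)
    have habc := Finset.card_insert_le a ({b, c} : Finset ℕ)
    omega
  -- pattern: |S| ≤ 2 and |U| ≥ d+2
  have pat2 : ∀ S : Finset ℕ, S.card ≤ 2 → d + 2 ≤ U.card →
      d ≤ (U \ S).card ∧ ∀ T, T ⊆ K → T.card = d - 1 → d - 1 ≤ (T.biUnion L \ S).card := by
    intro S hS hU2
    constructor
    · have := Finset.le_card_sdiff S U; omega
    · intro T hT hTc
      have hTne : T.Nonempty := Finset.card_pos.mp (by omega)
      have ha := hUnion T hT hTne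
      have hb := Finset.le_card_sdiff S (T.biUnion L)
      omega
  -- pattern: some element of S is outside U, |S| ≤ 3, |U| ≥ d+2
  have pat3 : ∀ (S : Finset ℕ) (x : ℕ), x ∈ S → x ∉ U → S.card ≤ 3 → d + 2 ≤ U.card →
      d ≤ (U \ S).card ∧ ∀ T, T ⊆ K → T.card = d - 1 → d - 1 ≤ (T.biUnion L \ S).card := by
    intro S x hxS hxU hS hU2
    constructor
    · have := card_sdiff_ge' hxS hxU; omega
    · intro T hT hTc
      have hTne : T.Nonempty := Finset.card_pos.mp (by omega)
      have hsub : T.biUnion L ⊆ U := Finset.biUnion_subset_biUnion_of_subset_left L hT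
      have hxT : x ∉ T.biUnion L := fun h => hxU (hsub h)
      have ha := card_sdiff_ge' hxS hxT
      have hb := hUnion T hT hTne
      omega
  -- pattern for case |U| = d+1 : |S ∩ U| ≤ 1
  have patA : ∀ S : Finset ℕ, (S ∩ U).card ≤ 1 → U.card ≤ d + 1 →
      d ≤ (U \ S).card ∧ ∀ T, T ⊆ K → T.card = d - 1 → d - 1 ≤ (T.biUnion L \ S).card := by
    intro S hSU hU1
    have hP1 : d ≤ (U \ S).card := by
      have hsub : U ⊆ (U \ S) ∪ (S ∩ U) := by
        intro x hx
        by_cases hxS : x ∈ S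
        · exact Finset.mem_union_right _ (Finset.mem_inter.mpr ⟨hxS, hx⟩)
        · exact Finset.mem_union_left _ (Finset.mem_sdiff.mpr ⟨hx, hxS⟩)
      have ha := Finset.card_le_card hsub
      have hb := Finset.card_union_le (U \ S) (S ∩ U)
      omega
    refine ⟨hP1, ?_⟩
    intro T hT hTc
    have hTne : T.Nonempty := Finset.card_pos.mp (by omega)
    have hsub : T.biUnion L ⊆ U := Finset.biUnion_subset_biUnion_of_subset_left L hT
    have heq : T.biUnion L = U :=
      Finset.eq_of_subset_of_card_le hsub (le_trans hU1 (hUnion T hT hTne))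
    rw [heq]; omega
  by_cases hUbig : d + 2 ≤ U.card
  · -- CASE B
    by_cases p12 : (L₁ ∩ L₂).Nonempty
    · obtain ⟨c, hc⟩ := p12
      obtain ⟨c₃, hc₃⟩ := hne3
      refine ⟨c, (Finset.mem_inter.mp hc).1, c, (Finset.mem_inter.mp hc).2, c₃, hc₃, ?_⟩
      have hEq : ({c, c, c₃} : Finset ℕ) = {c, c₃} := by ext x; simp
      have hs : ({c, c, c₃} : Finset ℕ).card ≤ 2 := by
        rw [hEq]; exact Finset.card_insert_le _ _
      exact pat2 _ hs hUbig
    by_cases p13 : (L₁ ∩ L₃).Nonempty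
    · obtain ⟨c, hc⟩ := p13
      obtain ⟨c₂, hc₂⟩ := hne2
      refine ⟨c, (Finset.mem_inter.mp hc).1, c₂, hc₂, c, (Finset.mem_inter.mp hc).2, ?_⟩
      have hEq : ({c, c₂, c} : Finset ℕ) = {c, c₂} := by ext x; simp; tauto
      have hs : ({c, c₂, c} : Finset ℕ).card ≤ 2 := by
        rw [hEq]; exact Finset.card_insert_le _ _
      exact pat2 _ hs hUbig
    by_cases p23 : (L₂ ∩ L₃).Nonempty
    · obtain ⟨c, hc⟩ := p23
      obtain ⟨c₁, hc₁⟩ := hne1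
      refine ⟨c₁, hc₁, c, (Finset.mem_inter.mp hc).1, c, (Finset.mem_inter.mp hc).2, ?_⟩
      have hEq : ({c₁, c, c} : Finset ℕ) = {c₁, c} := by ext x; simp
      have hs : ({c₁, c, c} : Finset ℕ).card ≤ 2 := by
        rw [hEq]; exact Finset.card_insert_le _ _
      exact pat2 _ hs hUbig
    -- pairwise disjoint
    have hd12 : Disjoint L₁ L₂ := by
      rw [Finset.disjoint_iff_inter_eq_empty]
      exact Finset.not_nonempty_iff_eq_empty.mp p12
    have hd13 : Disjoint L₁ L₃ := by
      rw [Finset.disjoint_iff_inter_eq_empty]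
      exact Finset.not_nonempty_iff_eq_empty.mp p13
    have hd23 : Disjoint L₂ L₃ := by
      rw [Finset.disjoint_iff_inter_eq_empty]
      exact Finset.not_nonempty_iff_eq_empty.mp p23
    have hsum : ∀ X : Finset ℕ, L₁ ⊆ X → L₂ ⊆ X → L₃ ⊆ X → 3 * (d - 1) ≤ X.card := by
      intro X hx1 hx2 hx3
      have hu : ((L₁ ∪ L₂) ∪ L₃).card = L₁.card + L₂.card + L₃.card := by
        rw [Finset.card_union_of_disjoint (Finset.disjoint_union_left.mpr ⟨hd13, hd23⟩),
          Finset.card_union_of_disjoint hd12]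
      have := Finset.card_le_card (Finset.union_subset (Finset.union_subset hx1 hx2) hx3)
      omega
    by_cases hU3 : d + 3 ≤ U.card
    · by_cases hbad : ∃ T, T ⊆ K ∧ T.card = d - 1 ∧ (T.biUnion L).card ≤ d + 1
      · obtain ⟨T₀, hT₀K, hT₀c, hT₀u⟩ := hbad
        set B := T₀.biUnion L with hBdef
        have hT₀ne : T₀.Nonempty := Finset.card_pos.mp (by omega)
        have hBcard : B.card = d + 1 := le_antisymm hT₀u (hUnion T₀ hT₀K hT₀ne)
        have hconst : ∀ w ∈ T₀, L w = B := by
          intro w hw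
          exact Finset.eq_of_subset_of_card_le (Finset.subset_biUnion_of_mem L hw)
            (by rw [hL w (hT₀K hw)]; exact hT₀u)
        have htight : ∀ T, T ⊆ K → T.card = d - 1 → (T.biUnion L).card ≤ d + 1 →
            T.biUnion L = B := by
          intro T hT hTc hTu
          have hi := Finset.card_inter_add_card_union T T₀
          have hsubK : T ∪ T₀ ⊆ K := Finset.union_subset hT hT₀K
          have hKu : (T ∪ T₀).card ≤ d := hK ▸ Finset.card_le_card hsubK
          have hne : (T ∩ T₀).Nonempty := Finset.card_pos.mp (by omega)
          obtain ⟨w, hw⟩ := hne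
          have hw1 := (Finset.mem_inter.mp hw).1
          have hw2 := (Finset.mem_inter.mp hw).2
          have hconstT : L w = T.biUnion L :=
            Finset.eq_of_subset_of_card_le (Finset.subset_biUnion_of_mem L hw1)
              (by rw [hL w (hT hw1)]; exact hTu)
          rw [← hconstT]; exact hconst w hw2
        have hBU : B ⊆ U := Finset.biUnion_subset_biUnion_of_subset_left L hT₀K
        have hnotall : ¬(L₁ ⊆ B ∧ L₂ ⊆ B ∧ L₃ ⊆ B) := by
          rintro ⟨x1, x2, x3⟩
          have := hsum B x1 x2 x3
          omega
        -- generic finisher given a special color outside B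
        have finish : ∀ S : Finset ℕ, S.card ≤ 3 → (∃ x ∈ S, x ∉ B) →
            d ≤ (U \ S).card ∧ ∀ T, T ⊆ K → T.card = d - 1 →
              d - 1 ≤ (T.biUnion L \ S).card := by
          rintro S hS ⟨x, hxS, hxB⟩
          constructor
          · have := Finset.le_card_sdiff S U; omega
          · intro T hT hTc
            by_cases hTu : (T.biUnion L).card ≤ d + 1
            · have hTB := htight T hT hTc hTu
              have hxT : x ∉ T.biUnion L := by rw [hTB]; exact hxB
              have ha := card_sdiff_ge' hxS hxT
              have hb : (T.biUnion L).card = d + 1 := by rw [hTB, hBcard]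
              omega
            · have := Finset.le_card_sdiff S (T.biUnion L); omega
        by_cases q1 : (L₁ \ B).Nonempty
        · obtain ⟨c₁, hc₁⟩ := q1
          rw [Finset.mem_sdiff] at hc₁
          obtain ⟨c₂, hc₂⟩ := hne2
          obtain ⟨c₃, hc₃⟩ := hne3
          exact ⟨c₁, hc₁.1, c₂, hc₂, c₃, hc₃,
            finish _ (hcard3 _ _ _) ⟨c₁, by simp, hc₁.2⟩⟩
        by_cases q2 : (L₂ \ B).Nonempty
        · obtain ⟨c₂, hc₂⟩ := q2
          rw [Finset.mem_sdiff] at hc₂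
          obtain ⟨c₁, hc₁⟩ := hne1
          obtain ⟨c₃, hc₃⟩ := hne3
          exact ⟨c₁, hc₁, c₂, hc₂.1, c₃, hc₃,
            finish _ (hcard3 _ _ _) ⟨c₂, by simp, hc₂.2⟩⟩
        by_cases q3 : (L₃ \ B).Nonempty
        · obtain ⟨c₃, hc₃⟩ := q3
          rw [Finset.mem_sdiff] at hc₃
          obtain ⟨c₁, hc₁⟩ := hne1
          obtain ⟨c₂, hc₂⟩ := hne2
          exact ⟨c₁, hc₁, c₂, hc₂, c₃, hc₃.1,
            finish _ (hcard3 _ _ _) ⟨c₃, by simp, hc₃.2⟩⟩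
        · exfalso
          apply hnotall
          refine ⟨?_, ?_, ?_⟩ <;>
            rw [← Finset.sdiff_eq_empty_iff_subset, ← Finset.not_nonempty_iff_eq_empty] <;>
            assumption
      · -- no tight set
        obtain ⟨c₁, hc₁⟩ := hne1
        obtain ⟨c₂, hc₂⟩ := hne2
        obtain ⟨c₃, hc₃⟩ := hne3
        refine ⟨c₁, hc₁, c₂, hc₂, c₃, hc₃, ?_, ?_⟩
        · have := Finset.le_card_sdiff ({c₁, c₂, c₃} : Finset ℕ) U
          have := hcard3 c₁ c₂ c₃
          omega
        · intro T hT hTc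
          have hTu : ¬(T.biUnion L).card ≤ d + 1 := fun h => hbad ⟨T, hT, hTc, h⟩
          have := Finset.le_card_sdiff ({c₁, c₂, c₃} : Finset ℕ) (T.biUnion L)
          have := hcard3 c₁ c₂ c₃
          omega
    · -- |U| = d + 2
      have hnotall : ¬(L₁ ⊆ U ∧ L₂ ⊆ U ∧ L₃ ⊆ U) := by
        rintro ⟨x1, x2, x3⟩
        have := hsum U x1 x2 x3
        omega
      by_cases q1 : (L₁ \ U).Nonempty
      · obtain ⟨c₁, hc₁⟩ := q1
        rw [Finset.mem_sdiff] at hc₁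
        obtain ⟨c₂, hc₂⟩ := hne2
        obtain ⟨c₃, hc₃⟩ := hne3
        exact ⟨c₁, hc₁.1, c₂, hc₂, c₃, hc₃,
          pat3 _ c₁ (by simp) hc₁.2 (hcard3 _ _ _) hUbig⟩
      by_cases q2 : (L₂ \ U).Nonempty
      · obtain ⟨c₂, hc₂⟩ := q2
        rw [Finset.mem_sdiff] at hc₂
        obtain ⟨c₁, hc₁⟩ := hne1
        obtain ⟨c₃, hc₃⟩ := hne3
        exact ⟨c₁, hc₁, c₂, hc₂.1, c₃, hc₃,
          pat3 _ c₂ (by simp) hc₂.2 (hcard3 _ _ _) hUbig⟩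
      by_cases q3 : (L₃ \ U).Nonempty
      · obtain ⟨c₃, hc₃⟩ := q3
        rw [Finset.mem_sdiff] at hc₃
        obtain ⟨c₁, hc₁⟩ := hne1
        obtain ⟨c₂, hc₂⟩ := hne2
        exact ⟨c₁, hc₁, c₂, hc₂, c₃, hc₃.1,
          pat3 _ c₃ (by simp) hc₃.2 (hcard3 _ _ _) hUbig⟩
      · exfalso
        apply hnotall
        refine ⟨?_, ?_, ?_⟩ <;>
          rw [← Finset.sdiff_eq_empty_iff_subset, ← Finset.not_nonempty_iff_eq_empty] <;>
          assumption
  · -- CASE A : |U| = d + 1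
    have hUle : U.card ≤ d + 1 := by omega
    have helperA : ∀ A B C : Finset ℕ, A.card = d - 1 → B.card = d - 1 → C.card = d - 1 →
        A ⊆ U → B ⊆ U →
        ∃ a ∈ A, ∃ b ∈ B, ∃ c ∈ C, (({a, b, c} : Finset ℕ) ∩ U).card ≤ 1 := by
      intro A B C hA hB hC hAU hBU
      have hABu : (A ∪ B).card ≤ U.card := Finset.card_le_card (Finset.union_subset hAU hBU)
      have hiAB := Finset.card_inter_add_card_union A B
      have hABne : (A ∩ B).Nonempty := Finset.card_pos.mp (by omega)
      obtain ⟨c, hc⟩ := hABne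
      have hcA := (Finset.mem_inter.mp hc).1
      have hcB := (Finset.mem_inter.mp hc).2
      by_cases hCU : (C \ U).Nonempty
      · obtain ⟨c₃, hc₃⟩ := hCU
        rw [Finset.mem_sdiff] at hc₃
        refine ⟨c, hcA, c, hcB, c₃, hc₃.1, ?_⟩
        have hsub : ({c, c, c₃} : Finset ℕ) ∩ U ⊆ {c} := by
          intro x hx
          simp only [Finset.mem_inter, Finset.mem_insert, Finset.mem_singleton] at hx
          simp only [Finset.mem_singleton]
          obtain ⟨h', hxU⟩ := hx
          rcases h' with rfl | rfl | rfl
          · rfl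
          · rfl
          · exact absurd hxU hc₃.2
        exact le_trans (Finset.card_le_card hsub) (by simp)
      · have hCU' : C ⊆ U := by
          rwa [Finset.not_nonempty_iff_eq_empty, Finset.sdiff_eq_empty_iff_subset] at hCU
        have hi2 := Finset.card_inter_add_card_union (A ∩ B) C
        have hu2 : ((A ∩ B) ∪ C).card ≤ U.card :=
          Finset.card_le_card (Finset.union_subset (le_trans Finset.inter_subset_left hAU) hCU')
        have hic : (A ∩ B) ∩ C ⊆ A ∩ B := Finset.inter_subset_left
        have h3' : ((A ∩ B) ∩ C).Nonempty := Finset.card_pos.mp (by omega)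
        obtain ⟨e, he⟩ := h3'
        have heAB := (Finset.mem_inter.mp he).1
        have heC := (Finset.mem_inter.mp he).2
        have heA := (Finset.mem_inter.mp heAB).1
        have heB := (Finset.mem_inter.mp heAB).2
        refine ⟨e, heA, e, heB, e, heC, ?_⟩
        have hsub : ({e, e, e} : Finset ℕ) ∩ U ⊆ {e} := by
          intro x hx
          simp only [Finset.mem_inter, Finset.mem_insert, Finset.mem_singleton] at hx
          simp only [Finset.mem_singleton]
          tauto
        exact le_trans (Finset.card_le_card hsub) (by simp)
    have two_out : ∀ a b c : ℕ, a ∉ U → b ∉ U →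
        (({a, b, c} : Finset ℕ) ∩ U).card ≤ 1 ∧ (({a, c, b} : Finset ℕ) ∩ U).card ≤ 1 ∧
        (({c, a, b} : Finset ℕ) ∩ U).card ≤ 1 := by
      intro a b c ha hb
      have key : ∀ s : Finset ℕ, s ⊆ {a, b, c} → (s ∩ U).card ≤ 1 := by
        intro s hs
        have hsub : s ∩ U ⊆ {c} := by
          intro x hx
          have hx1 := hs (Finset.mem_inter.mp hx).1
          have hxU := (Finset.mem_inter.mp hx).2
          simp only [Finset.mem_insert, Finset.mem_singleton] at hx1 ⊢
          rcases hx1 with rfl | rfl | rfl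
          · exact absurd hxU ha
          · exact absurd hxU hb
          · rfl
        exact le_trans (Finset.card_le_card hsub) (by simp)
      refine ⟨key _ ?_, key _ ?_, key _ ?_⟩ <;> intro x <;> simp <;> tauto
    by_cases e1 : (L₁ \ U).Nonempty
    · by_cases e2 : (L₂ \ U).Nonempty
      · obtain ⟨c₁, hc₁⟩ := e1
        obtain ⟨c₂, hc₂⟩ := e2
        rw [Finset.mem_sdiff] at hc₁ hc₂
        obtain ⟨c₃, hc₃⟩ := hne3
        exact ⟨c₁, hc₁.1, c₂, hc₂.1, c₃, hc₃,
          patA _ (two_out c₁ c₂ c₃ hc₁.2 hc₂.2).1 hUle⟩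
      · by_cases e3 : (L₃ \ U).Nonempty
        · obtain ⟨c₁, hc₁⟩ := e1
          obtain ⟨c₃, hc₃⟩ := e3
          rw [Finset.mem_sdiff] at hc₁ hc₃
          obtain ⟨c₂, hc₂⟩ := hne2
          exact ⟨c₁, hc₁.1, c₂, hc₂, c₃, hc₃.1,
            patA _ (two_out c₁ c₃ c₂ hc₁.2 hc₃.2).2.1 hUle⟩
        · -- L₂, L₃ ⊆ U
          have hL2U : L₂ ⊆ U := by
            rwa [Finset.not_nonempty_iff_eq_empty, Finset.sdiff_eq_empty_iff_subset] at e2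
          have hL3U : L₃ ⊆ U := by
            rwa [Finset.not_nonempty_iff_eq_empty, Finset.sdiff_eq_empty_iff_subset] at e3
          obtain ⟨a, haL, b, hbL, c, hcL, hcd⟩ := helperA L₂ L₃ L₁ h2 h3 h1 hL2U hL3U
          refine ⟨c, hcL, a, haL, b, hbL, ?_⟩
          have hEq : ({c, a, b} : Finset ℕ) = {a, b, c} := by ext x; simp; tauto
          rw [hEq]
          exact patA _ hcd hUle
    · have hL1U : L₁ ⊆ U := by
        rwa [Finset.not_nonempty_iff_eq_empty, Finset.sdiff_eq_empty_iff_subset] at e1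
      by_cases e2 : (L₂ \ U).Nonempty
      · by_cases e3 : (L₃ \ U).Nonempty
        · obtain ⟨c₂, hc₂⟩ := e2
          obtain ⟨c₃, hc₃⟩ := e3
          rw [Finset.mem_sdiff] at hc₂ hc₃
          obtain ⟨c₁, hc₁⟩ := hne1
          exact ⟨c₁, hc₁, c₂, hc₂.1, c₃, hc₃.1,
            patA _ (two_out c₂ c₃ c₁ hc₂.2 hc₃.2).2.2 hUle⟩
        · -- L₁, L₃ ⊆ U
          have hL3U : L₃ ⊆ U := by
            rwa [Finset.not_nonempty_iff_eq_empty, Finset.sdiff_eq_empty_iff_subset] at e3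
          obtain ⟨a, haL, b, hbL, c, hcL, hcd⟩ := helperA L₁ L₃ L₂ h1 h3 h2 hL1U hL3U
          refine ⟨a, haL, c, hcL, b, hbL, ?_⟩
          have hEq : ({a, c, b} : Finset ℕ) = {a, b, c} := by ext x; simp; tauto
          rw [hEq]
          exact patA _ hcd hUle
      · -- L₁, L₂ ⊆ U
        have hL2U : L₂ ⊆ U := by
          rwa [Finset.not_nonempty_iff_eq_empty, Finset.sdiff_eq_empty_iff_subset] at e2
        obtain ⟨a, haL, b, hbL, c, hcL, hcd⟩ := helperA L₁ L₂ L₃ h1 h2 h3 hL1U hL2U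
        exact ⟨a, haL, b, hbL, c, hcL, patA _ hcd hUle⟩

end SolitaryAux2



/-- Fix `d ≥ 6`. Let `Q` be a finite simple graph whose vertex set is
`K ∪ {u₁, u₂, u₃}`, with `u₁, u₂, u₃` three distinct vertices not in `K`, such that `Q[K]`
is a clique on `d` vertices, `{u₁, u₂, u₃}` is an independent set, and each `uᵢ` is
adjacent to every vertex of `K`.  Then `Q` is `(deg − 1)`-choosable. -/
theorem solitary_deg_minus_one_choosable
    {V : Type*} [Fintype V] [DecidableEq V] (d : ℕ) (hd : 6 ≤ d)
    (Q : SimpleGraph V) [DecidableRel Q.Adj]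
    (K : Finset V) (u₁ u₂ u₃ : V)
    (h12 : u₁ ≠ u₂) (h13 : u₁ ≠ u₃) (h23 : u₂ ≠ u₃)
    (hu₁ : u₁ ∉ K) (hu₂ : u₂ ∉ K) (hu₃ : u₃ ∉ K)
    (hV : insert u₁ (insert u₂ (insert u₃ K)) = (Finset.univ : Finset V))
    (hKcard : K.card = d) (hKclique : Q.IsClique (K : Set V))
    (hind : ¬ Q.Adj u₁ u₂ ∧ ¬ Q.Adj u₁ u₃ ∧ ¬ Q.Adj u₂ u₃)
    (hadj : ∀ w ∈ K, Q.Adj u₁ w ∧ Q.Adj u₂ w ∧ Q.Adj u₃ w) :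
    ∀ L : V → Finset ℕ, (∀ v, (L v).card = Q.degree v - 1) →
      ∃ φ : V → ℕ, (∀ v, φ v ∈ L v) ∧ ∀ a b, Q.Adj a b → φ a ≠ φ b := by
  intro L hL
  classical
  have hcases : ∀ v : V, v = u₁ ∨ v = u₂ ∨ v = u₃ ∨ v ∈ K := by
    intro v
    have hv : v ∈ insert u₁ (insert u₂ (insert u₃ K)) := hV ▸ Finset.mem_univ v
    simpa using hv
  -- neighborhoods of the u's
  have hnb1 : Q.neighborFinset u₁ = K := by
    ext v
    rw [SimpleGraph.mem_neighborFinset]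
    constructor
    · intro h
      rcases hcases v with rfl | rfl | rfl | hv
      · exact absurd h (Q.loopless.irrefl _)
      · exact absurd h hind.1
      · exact absurd h hind.2.1
      · exact hv
    · intro hv; exact (hadj v hv).1
  have hnb2 : Q.neighborFinset u₂ = K := by
    ext v
    rw [SimpleGraph.mem_neighborFinset]
    constructor
    · intro h
      rcases hcases v with rfl | rfl | rfl | hv
      · exact absurd h.symm hind.1
      · exact absurd h (Q.loopless.irrefl _)
      · exact absurd h hind.2.2
      · exact hv
    · intro hv; exact (hadj v hv).2.1
  have hnb3 : Q.neighborFinset u₃ = K := by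
    ext v
    rw [SimpleGraph.mem_neighborFinset]
    constructor
    · intro h
      rcases hcases v with rfl | rfl | rfl | hv
      · exact absurd h.symm hind.2.1
      · exact absurd h.symm hind.2.2
      · exact absurd h (Q.loopless.irrefl _)
      · exact hv
    · intro hv; exact (hadj v hv).2.2
  have hdeg1 : Q.degree u₁ = d := by
    rw [← SimpleGraph.card_neighborFinset_eq_degree, hnb1, hKcard]
  have hdeg2 : Q.degree u₂ = d := by
    rw [← SimpleGraph.card_neighborFinset_eq_degree, hnb2, hKcard]
  have hdeg3 : Q.degree u₃ = d := by
    rw [← SimpleGraph.card_neighborFinset_eq_degree, hnb3, hKcard]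
  have hLu1 : (L u₁).card = d - 1 := by rw [hL u₁, hdeg1]
  have hLu2 : (L u₂).card = d - 1 := by rw [hL u₂, hdeg2]
  have hLu3 : (L u₃).card = d - 1 := by rw [hL u₃, hdeg3]
  have hnbK : ∀ w ∈ K, Q.neighborFinset w = insert u₁ (insert u₂ (insert u₃ (K.erase w))) := by
    intro w hw
    ext v
    rw [SimpleGraph.mem_neighborFinset]
    simp only [Finset.mem_insert, Finset.mem_erase]
    constructor
    · intro h
      rcases hcases v with rfl | rfl | rfl | hv
      · exact Or.inl rfl
      · exact Or.inr (Or.inl rfl)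
      · exact Or.inr (Or.inr (Or.inl rfl))
      · exact Or.inr (Or.inr (Or.inr ⟨(Q.ne_of_adj h).symm, hv⟩))
    · rintro (rfl | rfl | rfl | ⟨hvw, hv⟩)
      · exact ((hadj w hw).1).symm
      · exact ((hadj w hw).2.1).symm
      · exact ((hadj w hw).2.2).symm
      · exact hKclique (Finset.mem_coe.mpr hw) (Finset.mem_coe.mpr hv) (Ne.symm hvw)
  have hdegK : ∀ w ∈ K, Q.degree w = d + 2 := by
    intro w hw
    have h3 : u₃ ∉ K.erase w := fun h => hu₃ (Finset.mem_of_mem_erase h)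
    have h2 : u₂ ∉ insert u₃ (K.erase w) := by
      simp only [Finset.mem_insert]
      rintro (h | h)
      · exact h23 h
      · exact hu₂ (Finset.mem_of_mem_erase h)
    have h1 : u₁ ∉ insert u₂ (insert u₃ (K.erase w)) := by
      simp only [Finset.mem_insert]
      rintro (h | h | h)
      · exact h12 h
      · exact h13 h
      · exact hu₁ (Finset.mem_of_mem_erase h)
    rw [← SimpleGraph.card_neighborFinset_eq_degree, hnbK w hw,
      Finset.card_insert_of_notMem h1, Finset.card_insert_of_notMem h2,
      Finset.card_insert_of_notMem h3, Finset.card_erase_of_mem hw, hKcard]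
    omega
  have hLK : ∀ w ∈ K, (L w).card = d + 1 := by
    intro w hw
    rw [hL w, hdegK w hw]
    omega
  obtain ⟨c₁, hc₁, c₂, hc₂, c₃, hc₃, P1, P2⟩ :=
    SolitaryAux2.choose_colors d hd K hKcard L hLK (L u₁) (L u₂) (L u₃) hLu1 hLu2 hLu3
  set S : Finset ℕ := {c₁, c₂, c₃} with hSdef
  have hSc : S.card ≤ 3 := by
    rw [hSdef]
    have hc : ({c₃} : Finset ℕ).card = 1 := Finset.card_singleton c₃
    have hbc := Finset.card_insert_le c₂ ({c₃} : Finset ℕ)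
    have habc := Finset.card_insert_le c₁ ({c₂, c₃} : Finset ℕ)
    omega
  have hall := SolitaryAux.hall_of_P d hd K hKcard L hLK S hSc P1 P2
  obtain ⟨f, hf1, hf2⟩ := SolitaryAux.exists_sdr K (fun w => L w \ S) hall
  have hfS : ∀ w ∈ K, f w ∉ S := fun w hw => (Finset.mem_sdiff.mp (hf1 w hw)).2
  have hfL : ∀ w ∈ K, f w ∈ L w := fun w hw => (Finset.mem_sdiff.mp (hf1 w hw)).1
  have hc₁S : c₁ ∈ S := by simp [hSdef]
  have hc₂S : c₂ ∈ S := by simp [hSdef]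
  have hc₃S : c₃ ∈ S := by simp [hSdef]
  refine ⟨fun v => if v = u₁ then c₁ else if v = u₂ then c₂ else if v = u₃ then c₃ else f v,
    ?_, ?_⟩
  · intro v
    rcases hcases v with rfl | rfl | rfl | hv
    · simpa using hc₁
    · simp only [if_neg (Ne.symm h12), if_pos rfl]
      exact hc₂
    · simp only [if_neg (Ne.symm h13), if_neg (Ne.symm h23), if_pos rfl]
      exact hc₃
    · have hv1 : v ≠ u₁ := fun h => hu₁ (h ▸ hv)
      have hv2 : v ≠ u₂ := fun h => hu₂ (h ▸ hv)
      have hv3 : v ≠ u₃ := fun h => hu₃ (h ▸ hv)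
      simp only [if_neg hv1, if_neg hv2, if_neg hv3]
      exact hfL v hv
  · intro a b hab
    have hKu : ∀ w ∈ K, w ≠ u₁ ∧ w ≠ u₂ ∧ w ≠ u₃ :=
      fun w hw => ⟨fun h => hu₁ (h ▸ hw), fun h => hu₂ (h ▸ hw), fun h => hu₃ (h ▸ hw)⟩
    rcases hcases a with rfl | rfl | rfl | ha <;> rcases hcases b with rfl | rfl | rfl | hb
    · exact absurd hab (Q.loopless.irrefl _)
    · exact absurd hab hind.1
    · exact absurd hab hind.2.1
    · obtain ⟨hb1, hb2, hb3⟩ := hKu b hb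
      simp only [if_pos rfl, if_neg hb1, if_neg hb2, if_neg hb3]
      exact fun h => hfS b hb (by rw [← h]; exact hc₁S)
    · exact absurd hab.symm hind.1
    · exact absurd hab (Q.loopless.irrefl _)
    · exact absurd hab hind.2.2
    · obtain ⟨hb1, hb2, hb3⟩ := hKu b hb
      simp only [if_neg (Ne.symm h12), if_pos rfl, if_neg hb1, if_neg hb2, if_neg hb3]
      exact fun h => hfS b hb (by rw [← h]; exact hc₂S)
    · exact absurd hab.symm hind.2.1
    · exact absurd hab.symm hind.2.2
    · exact absurd hab (Q.loopless.irrefl _)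
    · obtain ⟨hb1, hb2, hb3⟩ := hKu b hb
      simp only [if_neg (Ne.symm h13), if_neg (Ne.symm h23), if_pos rfl,
        if_neg hb1, if_neg hb2, if_neg hb3]
      exact fun h => hfS b hb (by rw [← h]; exact hc₃S)
    · obtain ⟨ha1, ha2, ha3⟩ := hKu a ha
      simp only [if_neg ha1, if_neg ha2, if_neg ha3, if_pos rfl]
      exact fun h => hfS a ha (by rw [h]; exact hc₁S)
    · obtain ⟨ha1, ha2, ha3⟩ := hKu a ha
      simp only [if_neg ha1, if_neg ha2, if_neg ha3, if_neg (Ne.symm h12), if_pos rfl]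
      exact fun h => hfS a ha (by rw [h]; exact hc₂S)
    · obtain ⟨ha1, ha2, ha3⟩ := hKu a ha
      simp only [if_neg ha1, if_neg ha2, if_neg ha3, if_neg (Ne.symm h13),
        if_neg (Ne.symm h23), if_pos rfl]
      exact fun h => hfS a ha (by rw [h]; exact hc₃S)
    · obtain ⟨ha1, ha2, ha3⟩ := hKu a ha
      obtain ⟨hb1, hb2, hb3⟩ := hKu b hb
      simp only [if_neg ha1, if_neg ha2, if_neg ha3, if_neg hb1, if_neg hb2, if_neg hb3]
      exact hf2 a ha b hb (Q.ne_of_adj hab)
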